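/- Let G be an additive abelian group and let h : G → G be an additive group endomorphism satisfying h(g) + h(g) = g for all g ∈ G. Let β : G × G → Circle be a bicharacter. Define β'(x,y) := β(x, h(y))·β(y, h(x))⁻¹. Then β' is a bicharacter, β' is antisymmetric (β'(x,y) = β'(y,x)⁻¹ for all x,y), and the bicharacter β(x,y)·β'(x,y)⁻¹ is symmetric; in particular β and β' are cohomologous. -/
import Mathlib


/-- Given a halving endomorphism `h` of an additive abelian group and a bicharacter `β`,
the map `β'(x,y) = β(x, h y) * β(y, h x)⁻¹` is an antisymmetric bicharacter cohomologous
to `β`, with `β * β'⁻¹` symmetric. -/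
theorem antisymmetric_representative_of_bicharacter {G : Type*} [AddCommGroup G]
    (h : G →+ G) (hhalf : ∀ g : G, h g + h g = g)
    (β : G → G → Circle)
    (hadd_left : ∀ x x' y : G, β (x + x') y = β x y * β x' y)
    (hadd_right : ∀ x y y' : G, β x (y + y') = β x y * β x y')
    (β' : G → G → Circle)
    (hβ' : ∀ x y : G, β' x y = β x (h y) * (β y (h x))⁻¹) :
    (∀ x x' y : G, β' (x + x') y = β' x y * β' x' y) ∧
    (∀ x y y' : G, β' x (y + y') = β' x y * β' x y') ∧
    (∀ x y : G, β' x y = (β' y x)⁻¹) ∧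
    (∀ x y : G, β x y * (β' x y)⁻¹ = β y x * (β' y x)⁻¹) ∧
    (∃ ρ : G → Circle, ∀ x y : G, β x y * ρ (x + y) = β' x y * ρ x * ρ y) := by
  have hsq : ∀ x y : G, β x (h y) * β x (h y) = β x y := by
    intro x y
    rw [← hadd_right, hhalf]
  refine ⟨?_, ?_, ?_, ?_, ?_⟩
  · intro x x' y
    rw [hβ', hβ', hβ', hadd_left, map_add, hadd_right]
    simp [mul_inv, mul_comm, mul_assoc, mul_left_comm]
  · intro x y y'
    rw [hβ', hβ', hβ', hadd_left, map_add, hadd_right]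
    simp [mul_inv, mul_comm, mul_assoc, mul_left_comm]
  · intro x y
    rw [hβ', hβ']
    simp [mul_inv, mul_comm]
  · intro x y
    rw [hβ', hβ']
    rw [← hsq x y, ← hsq y x]
    simp [mul_inv, inv_inv, mul_comm, mul_assoc, mul_left_comm]
  · refine ⟨fun x => (β x (h x))⁻¹, fun x y => ?_⟩
    show β x y * (β (x + y) (h (x + y)))⁻¹ =
      β' x y * (β x (h x))⁻¹ * (β y (h y))⁻¹
    rw [hβ', map_add, hadd_right, hadd_left, hadd_left]
    conv_lhs => rw [← hsq x y]
    simp only [mul_inv, mul_assoc]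
    congr 1
    rw [mul_left_comm (β x (h y)) ((β x (h x))⁻¹),
      mul_left_comm (β x (h y)) ((β y (h x))⁻¹), mul_inv_cancel_left,
      mul_left_comm]
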